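/- Let T be a locally compact second countable group, let Γ ≤ T be a lattice, and let H ≤ T be an open subgroup. Then Γ ∩ H is a lattice in H. -/

import Mathlib

open MeasureTheory Topology Set

/-- A discrete subgroup `Γ` of a lcsc group `T` is a *lattice* if it admits a Borel
fundamental domain of finite Haar measure. -/
def IsLattice (T : Type*) [Group T] [TopologicalSpace T] [MeasurableSpace T]
    (μ : Measure T) (Γ : Subgroup T) : Prop :=
  DiscreteTopology Γ ∧
    ∃ F : Set T, MeasurableSet F ∧ μ F < ⊤ ∧ ∀ t : T, ∃! γ : Γ, (γ : T)⁻¹ * t ∈ F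

/-- If `Γ` is a lattice in a lcsc group `T` and `H ≤ T` is an open subgroup, then `Γ ∩ H`
is a lattice in `H`. -/
theorem lattice_inter_open_subgroup
    (T : Type*) [Group T] [TopologicalSpace T] [IsTopologicalGroup T]
    [LocallyCompactSpace T] [SecondCountableTopology T]
    [MeasurableSpace T] [BorelSpace T]
    (μ : Measure T) [μ.IsHaarMeasure]
    (Γ : Subgroup T) (hΓ : IsLattice T μ Γ)
    (H : Subgroup T) (hH : IsOpen (H : Set T))
    (μH : Measure H) [μH.IsHaarMeasure] :
    IsLattice H μH (Γ.subgroupOf H) := by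
  classical
  obtain ⟨hdisc, D, Dmeas, Dfin, hD⟩ := hΓ
  have hHmeas : MeasurableSet (H : Set T) := hH.measurableSet
  haveI : BorelSpace H := Subtype.borelSpace (H : Set T)
  -- the natural map from Γ ∩ H to Γ
  set f : (Γ.subgroupOf H) → Γ := fun x => ⟨((x : H) : T), x.2⟩ with hf
  -- it is a topological embedding
  have hcompemb : IsEmbedding ((Subtype.val : Γ → T) ∘ f) := by
    have hcomp : (Subtype.val : Γ → T) ∘ f =
        (Subtype.val : H → T) ∘ (Subtype.val : (Γ.subgroupOf H) → H) := rfl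
    rw [hcomp]
    exact IsEmbedding.subtypeVal.comp IsEmbedding.subtypeVal
  have hfemb : IsEmbedding f :=
    IsEmbedding.of_comp (IsEmbedding.subtypeVal.continuous_iff.mpr hcompemb.continuous)
      continuous_subtype_val hcompemb
  constructor
  · exact hfemb.discreteTopology
  -- countability of Γ
  haveI hΓcount : Countable Γ :=
    (TopologicalSpace.separableSpace_iff_countable).mp inferInstance
  -- the setoid on Γ given by right cosets of Γ ∩ H
  set s : Setoid Γ := ⟨fun γ γ' => (γ : T) * (γ' : T)⁻¹ ∈ H, by
      constructor
      · intro γ; simpa using H.one_mem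
      · intro γ γ' h
        have := H.inv_mem h
        simpa [mul_inv_rev] using this
      · intro a b c hab hbc
        have := H.mul_mem hab hbc
        simpa [mul_assoc] using this⟩
  set Q := Quotient s with hQ
  haveI hQcount : Countable Q := Quotient.countable
  set rep : Q → Γ := Quotient.out with hrepdef
  have hout : ∀ γ : Γ, ((rep (Quotient.mk s γ) : Γ) : T) * (γ : T)⁻¹ ∈ H :=
    fun γ => Quotient.mk_out γ
  have houteq : ∀ q : Q, Quotient.mk s (rep q) = q := fun q => Quotient.out_eq q
  -- the candidate fundamental domain in H
  set F' : Set H := {h : H | ∃ q : Q, ((rep q : Γ) : T)⁻¹ * (h : T) ∈ D} with hF'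
  have hF'union : F' = ⋃ q : Q, (fun h : H => ((rep q : Γ) : T)⁻¹ * (h : T)) ⁻¹' D := by
    ext h; simp [hF']
  have hF'meas : MeasurableSet F' := by
    rw [hF'union]
    exact MeasurableSet.iUnion fun q =>
      ((continuous_const.mul continuous_subtype_val).measurable) Dmeas
  refine ⟨F', hF'meas, ?_, ?_⟩
  · -- finiteness of μH F'
    haveI hLC : LocallyCompactSpace H := hH.locallyCompactSpace
    haveI : SecondCountableTopology H := IsEmbedding.subtypeVal.secondCountableTopology
    set ν : Measure H := μ.comap Subtype.val with hν
    have hval : MeasurableEmbedding (Subtype.val : H → T) :=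
      MeasurableEmbedding.subtype_coe hHmeas
    have hνapp : ∀ u : Set H, ν u = μ (Subtype.val '' u) := fun u =>
      hval.comap_apply μ u
    haveI : ν.IsOpenPosMeasure := by
      constructor
      intro U hU hUne
      have hUopen : IsOpen (Subtype.val '' U) :=
        hH.isOpenEmbedding_subtypeVal.isOpen_iff_image_isOpen.mp hU
      rw [hνapp U]
      exact hUopen.measure_ne_zero μ (hUne.image _)
    haveI : IsFiniteMeasureOnCompacts ν := by
      constructor
      intro K hK
      rw [hνapp K]
      exact (hK.image continuous_subtype_val).measure_lt_top
    haveI : ν.IsMulLeftInvariant := by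
      constructor
      intro g
      refine Measure.ext fun u hu => ?_
      have hmul : Measurable fun x : H => g * x :=
        (continuous_const.mul continuous_id).measurable
      rw [Measure.map_apply hmul hu, hνapp u, hνapp _]
      have himg : Subtype.val '' ((fun x : H => g * x) ⁻¹' u) =
          (fun t : T => (g : T) * t) ⁻¹' (Subtype.val '' u) := by
        ext t
        constructor
        · rintro ⟨x, hx, rfl⟩
          exact ⟨g * x, hx, rfl⟩
        · rintro ⟨x, hx, hxe⟩
          refine ⟨g⁻¹ * x, ?_, ?_⟩
          · simpa using hx
          · show ((g⁻¹ * x : H) : T) = t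
            push_cast
            rw [hxe]
            group
      rw [himg, measure_preimage_mul μ (g : T) _]
    haveI : ν.IsHaarMeasure := ⟨⟩
    -- the measure of F' under ν is finite
    have hνF' : ν F' < ⊤ := by
      rw [hνapp F']
      set B : Q → Set T :=
        fun q => (H : Set T) ∩ (fun t : T => ((rep q : Γ) : T)⁻¹ * t) ⁻¹' D with hB
      have himg : Subtype.val '' F' = ⋃ q, B q := by
        ext t
        simp only [hB, Set.mem_iUnion, Set.mem_inter_iff, Set.mem_preimage, hF',
          Set.mem_image, Set.mem_setOf_eq]
        constructor
        · rintro ⟨x, ⟨q, hq⟩, rfl⟩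
          exact ⟨q, x.2, hq⟩
        · rintro ⟨q, htH, htD⟩
          exact ⟨⟨t, htH⟩, ⟨q, htD⟩, rfl⟩
      set C : Q → Set T :=
        fun q => (fun t : T => ((rep q : Γ) : T) * t) ⁻¹' (H : Set T) ∩ D with hC
      have hCmeas : ∀ q, MeasurableSet (C q) := fun q =>
        ((hH.preimage (continuous_const.mul continuous_id)).measurableSet).inter Dmeas
      have hBC : ∀ q, μ (B q) = μ (C q) := by
        intro q
        have hBq : B q = (fun t : T => ((rep q : Γ) : T)⁻¹ * t) ⁻¹' (C q) := by
          ext t; simp [hB, hC]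
        rw [hBq]
        exact measure_preimage_mul μ _ _
      have hdisj : Pairwise (Function.onFun Disjoint C) := by
        intro q q' hne
        rw [Function.onFun, Set.disjoint_left]
        intro t htq htq'
        apply hne
        have h1 : ((rep q : Γ) : T) * t ∈ H := htq.1
        have h2 : ((rep q' : Γ) : T) * t ∈ H := htq'.1
        have hgg : ((rep q : Γ) : T) * ((rep q' : Γ) : T)⁻¹ ∈ H := by
          have hmm := H.mul_mem h1 (H.inv_mem h2)
          have e : ((rep q : Γ) : T) * t * (((rep q' : Γ) : T) * t)⁻¹ =
              ((rep q : Γ) : T) * ((rep q' : Γ) : T)⁻¹ := by group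
          rwa [e] at hmm
        rw [← houteq q, ← houteq q']
        exact Quotient.sound hgg
      calc μ (Subtype.val '' F') = μ (⋃ q, B q) := by rw [himg]
        _ ≤ ∑' q, μ (B q) := measure_iUnion_le _
        _ = ∑' q, μ (C q) := tsum_congr hBC
        _ = μ (⋃ q, C q) := (measure_iUnion hdisj hCmeas).symm
        _ ≤ μ D := measure_mono (Set.iUnion_subset fun q => Set.inter_subset_right)
        _ < ⊤ := Dfin
    have heq : μH = Measure.haarScalarFactor μH ν • ν :=
      Measure.isMulLeftInvariant_eq_smul μH ν
    rw [heq]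
    simp only [Measure.smul_apply, smul_eq_mul, ENNReal.smul_def]
    exact ENNReal.mul_lt_top ENNReal.coe_lt_top hνF'
  · -- fundamental domain property
    intro h
    obtain ⟨γ, hγ, hγuniq⟩ := hD (h : T)
    set r : Γ := rep (Quotient.mk s γ) with hr
    have hδH : (γ : T) * (r : T)⁻¹ ∈ H := by
      have := H.inv_mem (hout γ)
      simpa [mul_inv_rev] using this
    refine ⟨⟨⟨(γ : T) * (r : T)⁻¹, hδH⟩, by
        simpa [Subgroup.mem_subgroupOf] using Γ.mul_mem γ.2 (Γ.inv_mem r.2)⟩, ?_, ?_⟩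
    · refine ⟨Quotient.mk s γ, ?_⟩
      have key : ((rep (Quotient.mk s γ) : Γ) : T)⁻¹ *
          (((γ : T) * (r : T)⁻¹)⁻¹ * (h : T)) ∈ D := by
        have e : ((rep (Quotient.mk s γ) : Γ) : T)⁻¹ *
            (((γ : T) * (r : T)⁻¹)⁻¹ * (h : T)) = (γ : T)⁻¹ * (h : T) := by
          rw [← hr]; group
        rw [e]; exact hγ
      simpa [mul_assoc] using key
    · rintro ⟨⟨δ', hδ'H⟩, hδ'Γ⟩ hmem
      obtain ⟨q, hq⟩ := hmem
      have hδ'Γ' : δ' ∈ Γ := by simpa [Subgroup.mem_subgroupOf] using hδ'Γ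
      set r' : Γ := rep q with hr'
      have hγ' : ((⟨δ', hδ'Γ'⟩ * r' : Γ) : T)⁻¹ * (h : T) ∈ D := by
        have e : ((⟨δ', hδ'Γ'⟩ * r' : Γ) : T)⁻¹ * (h : T) =
            ((r' : Γ) : T)⁻¹ * (δ'⁻¹ * (h : T)) := by
          push_cast
          group
        rw [e]
        have e2 : ((rep q : Γ) : T)⁻¹ * ((δ'⁻¹ * (h : T))) =
            ((r' : Γ) : T)⁻¹ * (δ'⁻¹ * (h : T)) := by rw [← hr']
        rw [← e2]
        simpa [mul_assoc] using hq
      have hγeq : (⟨δ', hδ'Γ'⟩ * r' : Γ) = γ := hγuniq _ hγ'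
      have hδval : δ' * ((r' : Γ) : T) = (γ : T) := congrArg Subtype.val hγeq
      have hqeq : q = Quotient.mk s γ := by
        rw [← houteq q]
        apply Quotient.sound
        show ((rep q : Γ) : T) * (γ : T)⁻¹ ∈ H
        have e : ((rep q : Γ) : T) * (γ : T)⁻¹ = δ'⁻¹ := by
          rw [← hr', ← hδval]; group
        rw [e]
        exact H.inv_mem hδ'H
      ext
      show δ' = (γ : T) * (r : T)⁻¹
      rw [← hδval, hr, ← hqeq, ← hr']
      group
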